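/- Let λ ≥ 3 and set ε := 2λ·√((λ−3)/(λ−1)). Then 0 ≤ ε < 2λ, λ − ε/2 > 0, and 1/(λ−ε/2) + 1/λ + 1/(λ+ε/2) = 1. -/

import Mathlib

theorem stmt_10 (lam ε : ℝ) (hlam : 3 ≤ lam)
    (hε : ε = 2 * lam * Real.sqrt ((lam - 3) / (lam - 1))) :
    0 ≤ ε ∧ ε < 2 * lam ∧ 0 < lam - ε / 2 ∧
    1 / (lam - ε / 2) + 1 / lam + 1 / (lam + ε / 2) = 1 := by
  have h1 : (0:ℝ) < lam - 1 := by linarith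
  have hlam0 : (0:ℝ) < lam := by linarith
  have ht0 : 0 ≤ (lam - 3) / (lam - 1) := div_nonneg (by linarith) h1.le
  have ht1 : (lam - 3) / (lam - 1) < 1 := by rw [div_lt_one h1]; linarith
  set s := Real.sqrt ((lam - 3) / (lam - 1)) with hs
  have hs0 : 0 ≤ s := Real.sqrt_nonneg _
  have hsq : s ^ 2 = (lam - 3) / (lam - 1) := Real.sq_sqrt ht0
  have hs1 : s < 1 := by
    nlinarith [hsq, ht1, hs0]
  have hs2 : s ^ 2 * (lam - 1) = lam - 3 := by
    rw [hsq]; field_simp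
  have hεval : ε / 2 = lam * s := by rw [hε]; ring
  have hgap : 0 < lam - ε / 2 := by rw [hεval]; nlinarith
  refine ⟨by rw [hε]; positivity, by nlinarith, hgap, ?_⟩
  have hplus : 0 < lam + ε / 2 := by nlinarith
  rw [hεval] at hgap hplus ⊢
  rw [div_add_div _ _ hgap.ne' hlam0.ne', div_add_div _ _ (mul_ne_zero hgap.ne' hlam0.ne') hplus.ne',
    div_eq_one_iff_eq (mul_pos (mul_pos hgap hlam0) hplus).ne']
  linear_combination (lam^2) * hs2
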